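/- For every symmetric r×r real matrix H, the second derivative at t = 0 of t ↦ L(μ, Ψ + t·H) equals (N/2)·tr(Ψ⁻¹HΨ⁻¹H) + (1/(2(ν + r)))·∑_{n=1}^N w_n² (x̃_nᵀΨ⁻¹HΨ⁻¹x̃_n)² − ∑_{n=1}^N w_n · x̃_nᵀΨ⁻¹HΨ⁻¹HΨ⁻¹x̃_n. -/

import Mathlib

open Matrix BigOperators

attribute [local instance] Matrix.linftyOpNormedRing Matrix.linftyOpNormedAlgebra

section Aux

variable {r : ℕ}

lemma hasDerivAt_path (Ψ H : Matrix (Fin r) (Fin r) ℝ) (t : ℝ) :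
    HasDerivAt (fun s : ℝ => Ψ + s • H) H t := by
  have := ((hasDerivAt_id' t).smul_const H).const_add Ψ
  rwa [one_smul] at this

lemma hasDerivAt_inv_path {Ψ H : Matrix (Fin r) (Fin r) ℝ} {t : ℝ}
    (h : (Ψ + t • H).det ≠ 0) :
    HasDerivAt (fun s : ℝ => (Ψ + s • H)⁻¹)
      (-((Ψ + t • H)⁻¹ * H * (Ψ + t • H)⁻¹)) t := by
  set A := Ψ + t • H with hA
  have hAu : IsUnit A := (Matrix.isUnit_iff_isUnit_det A).mpr (isUnit_iff_ne_zero.mpr h)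
  obtain ⟨u, hu⟩ := hAu
  have hinv : HasFDerivAt Ring.inverse
      (-(ContinuousLinearMap.mulLeftRight ℝ (Matrix (Fin r) (Fin r) ℝ) ↑u⁻¹ ↑u⁻¹)) A :=
    hu ▸ hasFDerivAt_ringInverse u
  have hcomp := hinv.comp_hasDerivAt t (hasDerivAt_path Ψ H t)
  have huinv : (↑u⁻¹ : Matrix (Fin r) (Fin r) ℝ) = A⁻¹ := by
    rw [Matrix.nonsing_inv_eq_ringInverse, ← hu, Ring.inverse_unit]
  simp only [Function.comp_def, ContinuousLinearMap.neg_apply,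
    ContinuousLinearMap.mulLeftRight_apply, huinv] at hcomp
  have : (fun s : ℝ => Ring.inverse (Ψ + s • H)) = fun s : ℝ => (Ψ + s • H)⁻¹ := by
    funext s; rw [Matrix.nonsing_inv_eq_ringInverse]
  rw [this] at hcomp
  simp only [Matrix.mul_assoc] at hcomp ⊢
  exact hcomp

lemma hasDerivAt_lin (ℓ : Matrix (Fin r) (Fin r) ℝ →ₗ[ℝ] ℝ) {f : ℝ → Matrix (Fin r) (Fin r) ℝ}
    {f' : Matrix (Fin r) (Fin r) ℝ} {t : ℝ} (hf : HasDerivAt f f' t) :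
    HasDerivAt (fun s => ℓ (f s)) (ℓ f') t := by
  have := (LinearMap.toContinuousLinearMap ℓ).hasFDerivAt.comp_hasDerivAt t hf
  exact this

/-- trace functional -/
def trLin (H : Matrix (Fin r) (Fin r) ℝ) : Matrix (Fin r) (Fin r) ℝ →ₗ[ℝ] ℝ where
  toFun M := Matrix.trace (M * H)
  map_add' M N := by simp [Matrix.add_mul]
  map_smul' c M := by simp [Matrix.smul_mul]

/-- quadratic-form functional -/
def quadLin (v : Fin r → ℝ) : Matrix (Fin r) (Fin r) ℝ →ₗ[ℝ] ℝ where
  toFun M := v ⬝ᵥ (M *ᵥ v)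
  map_add' M N := by simp [Matrix.add_mulVec, dotProduct_add]
  map_smul' c M := by simp [Matrix.smul_mulVec, dotProduct_smul]

lemma hasDerivAt_det_path {Ψ H : Matrix (Fin r) (Fin r) ℝ} {t₀ : ℝ}
    (h : (Ψ + t₀ • H).det ≠ 0) :
    HasDerivAt (fun t : ℝ => (Ψ + t • H).det)
      ((Ψ + t₀ • H).det * Matrix.trace ((Ψ + t₀ • H)⁻¹ * H)) t₀ := by
  set A := Ψ + t₀ • H with hA
  have hAu : IsUnit A.det := isUnit_iff_ne_zero.mpr h
  set M := A⁻¹ * H with hM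
  have hAM : A * M = H := by
    rw [hM, Matrix.mul_nonsing_inv_cancel_left _ _ hAu]
  set P : Polynomial ℝ :=
    (Matrix.det (1 + (Polynomial.X : Polynomial ℝ) • M.map Polynomial.C)).divX.divX with hP
  have key : (fun t : ℝ => (Ψ + t • H).det)
      = fun t : ℝ => A.det * (1 + Matrix.trace M * (t - t₀) + P.eval (t - t₀) * (t - t₀) ^ 2) := by
    funext t
    have h1 : Ψ + t • H = A * (1 + (t - t₀) • M) := by
      rw [Matrix.mul_add, Matrix.mul_one, Matrix.mul_smul, hAM, hA, sub_smul]
      abel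
    rw [h1, Matrix.det_mul, Matrix.det_one_add_smul]
  rw [key]
  have h1 : HasDerivAt (fun t : ℝ => t - t₀) 1 t₀ := (hasDerivAt_id t₀).sub_const t₀
  have h2 : HasDerivAt (fun t : ℝ => Matrix.trace M * (t - t₀)) (Matrix.trace M) t₀ := by
    simpa using h1.const_mul (Matrix.trace M)
  have h3 : HasDerivAt (fun t : ℝ => P.eval (t - t₀)) (P.derivative.eval 0 * 1) t₀ := by
    have := HasDerivAt.comp (h := fun t : ℝ => t - t₀) t₀ (P.hasDerivAt (t₀ - t₀)) h1
    simpa [Function.comp_def, sub_self] using this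
  have h4 : HasDerivAt (fun t : ℝ => (t - t₀) ^ 2) 0 t₀ := by
    have := h1.fun_pow 2
    simpa [sub_self] using this
  have h5 : HasDerivAt (fun t : ℝ => P.eval (t - t₀) * (t - t₀) ^ 2) 0 t₀ := by
    have := h3.fun_mul h4
    simpa [sub_self] using this
  have h6 : HasDerivAt
      (fun t : ℝ => 1 + Matrix.trace M * (t - t₀) + P.eval (t - t₀) * (t - t₀) ^ 2)
      (Matrix.trace M) t₀ := by
    simpa using (h2.const_add 1).fun_add h5
  simpa using h6.const_mul A.det

lemma hasDerivAt_log_det_path {Ψ H : Matrix (Fin r) (Fin r) ℝ} {t₀ : ℝ}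
    (h : (Ψ + t₀ • H).det ≠ 0) :
    HasDerivAt (fun t : ℝ => Real.log (Ψ + t • H).det)
      (Matrix.trace ((Ψ + t₀ • H)⁻¹ * H)) t₀ := by
  have := (hasDerivAt_det_path h).log h
  rwa [mul_comm, mul_div_assoc, div_self h, mul_one] at this

lemma scalar_aux {a b q1 q2 : ℝ} (ha : a ≠ 0) (hb : b ≠ 0) :
    a / 2 * ((2 * q2 * b - q1 ^ 2) / b ^ 2) = a / b * q2 - 1 / (2 * a) * ((a / b) ^ 2 * q1 ^ 2) := by
  field_simp

end Aux

/-- The essential part of the log-likelihood of `N` observations from the multivariate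
`t_ν` distribution with location `μ` and scatter matrix `Ψ`. -/
noncomputable def tLogLik (r N : ℕ) (ν : ℝ) (x : Fin N → Fin r → ℝ)
    (μ : Fin r → ℝ) (Ψ : Matrix (Fin r) (Fin r) ℝ) : ℝ :=
  -((N : ℝ) / 2) * Real.log Ψ.det
    - ((ν + r) / 2) * ∑ n, Real.log (1 + ((x n - μ) ⬝ᵥ (Ψ⁻¹ *ᵥ (x n - μ))) / ν)

/-- the second derivative at `t = 0` of `t ↦ L(μ, Ψ + t•H)` equals
`(N/2)·tr(Ψ⁻¹HΨ⁻¹H) + (1/(2(ν+r)))·∑ₙ wₙ² (x̃ₙᵀΨ⁻¹HΨ⁻¹x̃ₙ)² − ∑ₙ wₙ x̃ₙᵀΨ⁻¹HΨ⁻¹HΨ⁻¹x̃ₙ`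
(the Ψ–Ψ block of the Fisher information matrix). -/
theorem second_deriv_scatter
    (r N : ℕ) (hr : 1 ≤ r) (hN : 1 ≤ N) (ν : ℝ) (hν : 0 < ν)
    (x : Fin N → Fin r → ℝ) (μ : Fin r → ℝ)
    (Ψ : Matrix (Fin r) (Fin r) ℝ) (hΨ : Ψ.PosDef)
    (δ : Fin N → ℝ)
    (hδ : ∀ n, δ n = (x n - μ) ⬝ᵥ (Ψ⁻¹ *ᵥ (x n - μ)))
    (w : Fin N → ℝ)
    (hw : ∀ n, w n = (ν + r) / (ν + δ n))
    (H : Matrix (Fin r) (Fin r) ℝ) (hH : H.IsSymm) :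
    deriv (deriv (fun t : ℝ => tLogLik r N ν x μ (Ψ + t • H))) 0
      = ((N : ℝ) / 2) * Matrix.trace (Ψ⁻¹ * H * Ψ⁻¹ * H)
        + (1 / (2 * (ν + r))) * ∑ n, (w n) ^ 2 *
            ((x n - μ) ⬝ᵥ (Ψ⁻¹ *ᵥ (H *ᵥ (Ψ⁻¹ *ᵥ (x n - μ))))) ^ 2
        - ∑ n, w n *
            ((x n - μ) ⬝ᵥ (Ψ⁻¹ *ᵥ (H *ᵥ (Ψ⁻¹ *ᵥ (H *ᵥ (Ψ⁻¹ *ᵥ (x n - μ))))))) := by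
  have hνr : (0:ℝ) < ν + r := by positivity
  have hdetΨ : Ψ.det ≠ 0 := hΨ.det_pos.ne'
  have hA0 : Ψ + (0:ℝ) • H = Ψ := by simp
  have hδ0 : ∀ n, 0 ≤ δ n := by
    intro n
    rw [hδ n]
    have := hΨ.posSemidef.inv.dotProduct_mulVec_nonneg (x n - μ)
    rwa [star_trivial] at this
  have hνδ : ∀ n, ν + δ n ≠ 0 := fun n => by have := hδ0 n; positivity
  have hdet0 : (Ψ + (0:ℝ) • H).det ≠ 0 := by rw [hA0]; exact hdetΨ
  -- derivative of the quadratic form δₙ(t)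
  have hDd : ∀ (t₀ : ℝ), (Ψ + t₀ • H).det ≠ 0 → ∀ n : Fin N,
      HasDerivAt (fun t : ℝ => (x n - μ) ⬝ᵥ ((Ψ + t • H)⁻¹ *ᵥ (x n - μ)))
        (-((x n - μ) ⬝ᵥ (((Ψ + t₀ • H)⁻¹ * H * (Ψ + t₀ • H)⁻¹) *ᵥ (x n - μ)))) t₀ := by
    intro t₀ h n
    have := hasDerivAt_lin (quadLin ((x n - μ))) (hasDerivAt_inv_path h)
    simpa only [quadLin, LinearMap.coe_mk, AddHom.coe_mk, Matrix.neg_mulVec,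
      dotProduct_neg] using this
  have hνδ' : ∀ n : Fin N, ν + (x n - μ) ⬝ᵥ (Ψ⁻¹ *ᵥ (x n - μ)) ≠ 0 := by
    intro n; rw [← hδ n]; exact hνδ n
  -- first derivative on a neighbourhood of 0
  set g : ℝ → ℝ := fun t =>
    -((N:ℝ)/2) * Matrix.trace ((Ψ + t • H)⁻¹ * H)
      - ((ν + r)/2) * ∑ n, (-((x n - μ) ⬝ᵥ (((Ψ + t • H)⁻¹ * H * (Ψ + t • H)⁻¹) *ᵥ (x n - μ)))
          / (ν + (x n - μ) ⬝ᵥ ((Ψ + t • H)⁻¹ *ᵥ (x n - μ)))) with hg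
  have hL : ∀ (t₀ : ℝ), (Ψ + t₀ • H).det ≠ 0 →
      (∀ n : Fin N, ν + (x n - μ) ⬝ᵥ ((Ψ + t₀ • H)⁻¹ *ᵥ (x n - μ)) ≠ 0) →
      HasDerivAt (fun t : ℝ => tLogLik r N ν x μ (Ψ + t • H)) (g t₀) t₀ := by
    intro t₀ hdet hden
    have h1 : HasDerivAt (fun t : ℝ => Real.log (Ψ + t • H).det)
        (Matrix.trace ((Ψ + t₀ • H)⁻¹ * H)) t₀ := hasDerivAt_log_det_path hdet
    have h2 : ∀ n : Fin N, HasDerivAt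
        (fun t : ℝ => Real.log (1 + ((x n - μ) ⬝ᵥ ((Ψ + t • H)⁻¹ *ᵥ (x n - μ))) / ν))
        (-((x n - μ) ⬝ᵥ (((Ψ + t₀ • H)⁻¹ * H * (Ψ + t₀ • H)⁻¹) *ᵥ (x n - μ)))
          / (ν + (x n - μ) ⬝ᵥ ((Ψ + t₀ • H)⁻¹ *ᵥ (x n - μ)))) t₀ := by
      intro n
      have hd := hDd t₀ hdet n
      have he : 1 + ((x n - μ) ⬝ᵥ ((Ψ + t₀ • H)⁻¹ *ᵥ (x n - μ))) / ν
          = (ν + (x n - μ) ⬝ᵥ ((Ψ + t₀ • H)⁻¹ *ᵥ (x n - μ))) / ν := by field_simp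
      have hne : 1 + ((x n - μ) ⬝ᵥ ((Ψ + t₀ • H)⁻¹ *ᵥ (x n - μ))) / ν ≠ 0 := by
        rw [he]
        exact div_ne_zero (hden n) hν.ne'
      have hlog := ((hd.div_const ν).const_add 1).log hne
      convert hlog using 1
      rw [he, div_div_div_cancel_right₀]
      exact hν.ne'
    have hsum := HasDerivAt.fun_sum (u := Finset.univ) (fun n _ => h2 n)
    have hcomb := (h1.const_mul (-((N:ℝ)/2))).fun_sub (hsum.const_mul ((ν + r)/2))
    exact hcomb
  -- eventually conditions near 0
  have hcontdet : ContinuousAt (fun t : ℝ => (Ψ + t • H).det) 0 := by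
    have hc : Continuous fun t : ℝ => Ψ + t • H :=
      continuous_const.add (continuous_id.smul continuous_const)
    exact hc.matrix_det.continuousAt
  have hE1 : ∀ᶠ t in nhds (0:ℝ), (Ψ + t • H).det ≠ 0 := hcontdet.eventually_ne hdet0
  have hE2 : ∀ n : Fin N, ∀ᶠ t in nhds (0:ℝ),
      ν + (x n - μ) ⬝ᵥ ((Ψ + t • H)⁻¹ *ᵥ (x n - μ)) ≠ 0 := by
    intro n
    have hc : ContinuousAt (fun t : ℝ => ν + (x n - μ) ⬝ᵥ ((Ψ + t • H)⁻¹ *ᵥ (x n - μ))) 0 :=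
      continuousAt_const.add (hDd 0 hdet0 n).continuousAt
    have hval : ν + (x n - μ) ⬝ᵥ ((Ψ + (0:ℝ) • H)⁻¹ *ᵥ (x n - μ)) ≠ 0 := by
      rw [hA0]; exact hνδ' n
    exact hc.eventually_ne hval
  have hE : ∀ᶠ t in nhds (0:ℝ), (Ψ + t • H).det ≠ 0 ∧
      ∀ n : Fin N, ν + (x n - μ) ⬝ᵥ ((Ψ + t • H)⁻¹ *ᵥ (x n - μ)) ≠ 0 :=
    hE1.and (Filter.eventually_all.mpr hE2)
  have hEq : deriv (fun t : ℝ => tLogLik r N ν x μ (Ψ + t • H)) =ᶠ[nhds (0:ℝ)] g :=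
    hE.mono fun t ht => (hL t ht.1 ht.2).deriv
  rw [hEq.deriv_eq]
  -- derivative of g at 0
  have hinv0 : HasDerivAt (fun t : ℝ => (Ψ + t • H)⁻¹) (-(Ψ⁻¹ * H * Ψ⁻¹)) 0 := by
    have := hasDerivAt_inv_path hdet0
    simpa only [zero_smul, add_zero] using this
  have htr : HasDerivAt (fun t : ℝ => Matrix.trace ((Ψ + t • H)⁻¹ * H))
      (-Matrix.trace (Ψ⁻¹ * H * Ψ⁻¹ * H)) 0 := by
    have := hasDerivAt_lin (trLin H) hinv0
    simpa [trLin, Matrix.neg_mul] using this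
  have hB : HasDerivAt (fun t : ℝ => (Ψ + t • H)⁻¹ * H * (Ψ + t • H)⁻¹)
      (-(Ψ⁻¹ * H * Ψ⁻¹) * H * Ψ⁻¹ + Ψ⁻¹ * H * -(Ψ⁻¹ * H * Ψ⁻¹)) 0 := by
    have := (hinv0.mul_const H).fun_mul hinv0
    simp only [zero_smul, add_zero] at this
    exact this
  have hsummand : ∀ n : Fin N, HasDerivAt
      (fun t : ℝ => -((x n - μ) ⬝ᵥ (((Ψ + t • H)⁻¹ * H * (Ψ + t • H)⁻¹) *ᵥ (x n - μ)))
          / (ν + (x n - μ) ⬝ᵥ ((Ψ + t • H)⁻¹ *ᵥ (x n - μ))))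
      ((2 * ((x n - μ) ⬝ᵥ ((Ψ⁻¹ * H * Ψ⁻¹ * H * Ψ⁻¹) *ᵥ (x n - μ))) * (ν + δ n)
          - ((x n - μ) ⬝ᵥ ((Ψ⁻¹ * H * Ψ⁻¹) *ᵥ (x n - μ))) ^ 2) / (ν + δ n) ^ 2) 0 := by
    intro n
    have hq2 := hasDerivAt_lin (quadLin (x n - μ)) hB
    simp only [quadLin, LinearMap.coe_mk, AddHom.coe_mk] at hq2
    have hnum := hq2.fun_neg
    have hd0 := hDd 0 hdet0 n
    have hden := hd0.const_add ν
    have hne : ν + (x n - μ) ⬝ᵥ ((Ψ + (0:ℝ) • H)⁻¹ *ᵥ (x n - μ)) ≠ 0 := by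
      rw [hA0]; exact hνδ' n
    have hdiv := hnum.fun_div hden hne
    simp only [zero_smul, add_zero] at hdiv
    refine hdiv.congr_deriv ?_
    have e3 : (x n - μ) ⬝ᵥ ((-(Ψ⁻¹ * H * Ψ⁻¹) * H * Ψ⁻¹ + Ψ⁻¹ * H * -(Ψ⁻¹ * H * Ψ⁻¹)) *ᵥ (x n - μ))
        = -2 * ((x n - μ) ⬝ᵥ ((Ψ⁻¹ * H * Ψ⁻¹ * H * Ψ⁻¹) *ᵥ (x n - μ))) := by
      simp [Matrix.add_mulVec, Matrix.neg_mulVec, dotProduct_add, dotProduct_neg,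
        Matrix.neg_mul, Matrix.mul_neg, Matrix.mul_assoc]
      ring
    rw [e3, ← hδ n]
    ring
  have hg' : HasDerivAt g
      (-((N:ℝ)/2) * (-Matrix.trace (Ψ⁻¹ * H * Ψ⁻¹ * H))
        - ((ν + r)/2) * ∑ n, ((2 * ((x n - μ) ⬝ᵥ ((Ψ⁻¹ * H * Ψ⁻¹ * H * Ψ⁻¹) *ᵥ (x n - μ))) * (ν + δ n)
            - ((x n - μ) ⬝ᵥ ((Ψ⁻¹ * H * Ψ⁻¹) *ᵥ (x n - μ))) ^ 2) / (ν + δ n) ^ 2)) 0 := by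
    rw [hg]
    exact (htr.const_mul (-((N:ℝ)/2))).fun_sub
      ((HasDerivAt.fun_sum (fun n _ => hsummand n)).const_mul ((ν + r)/2))
  rw [hg'.deriv]
  -- final algebra
  have hterm : ∀ n : Fin N,
      ((ν + (r:ℝ))/2) * ((2 * ((x n - μ) ⬝ᵥ ((Ψ⁻¹ * H * Ψ⁻¹ * H * Ψ⁻¹) *ᵥ (x n - μ))) * (ν + δ n)
            - ((x n - μ) ⬝ᵥ ((Ψ⁻¹ * H * Ψ⁻¹) *ᵥ (x n - μ))) ^ 2) / (ν + δ n) ^ 2)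
        = w n * ((x n - μ) ⬝ᵥ (Ψ⁻¹ *ᵥ (H *ᵥ (Ψ⁻¹ *ᵥ (H *ᵥ (Ψ⁻¹ *ᵥ (x n - μ)))))))
          - 1 / (2 * (ν + r)) * (w n ^ 2 * ((x n - μ) ⬝ᵥ (Ψ⁻¹ *ᵥ (H *ᵥ (Ψ⁻¹ *ᵥ (x n - μ))))) ^ 2) := by
    intro n
    rw [hw n]
    have e1 : (x n - μ) ⬝ᵥ (Ψ⁻¹ *ᵥ (H *ᵥ (Ψ⁻¹ *ᵥ (x n - μ))))
        = (x n - μ) ⬝ᵥ ((Ψ⁻¹ * H * Ψ⁻¹) *ᵥ (x n - μ)) := by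
      simp [Matrix.mul_assoc]
    have e2 : (x n - μ) ⬝ᵥ (Ψ⁻¹ *ᵥ (H *ᵥ (Ψ⁻¹ *ᵥ (H *ᵥ (Ψ⁻¹ *ᵥ (x n - μ))))))
        = (x n - μ) ⬝ᵥ ((Ψ⁻¹ * H * Ψ⁻¹ * H * Ψ⁻¹) *ᵥ (x n - μ)) := by
      simp [Matrix.mul_assoc]
    rw [e1, e2]
    exact scalar_aux hνr.ne' (hνδ n)
  have hsL : ((ν + (r:ℝ))/2) * ∑ n, ((2 * ((x n - μ) ⬝ᵥ ((Ψ⁻¹ * H * Ψ⁻¹ * H * Ψ⁻¹) *ᵥ (x n - μ))) * (ν + δ n)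
            - ((x n - μ) ⬝ᵥ ((Ψ⁻¹ * H * Ψ⁻¹) *ᵥ (x n - μ))) ^ 2) / (ν + δ n) ^ 2)
      = ∑ n, w n * ((x n - μ) ⬝ᵥ (Ψ⁻¹ *ᵥ (H *ᵥ (Ψ⁻¹ *ᵥ (H *ᵥ (Ψ⁻¹ *ᵥ (x n - μ)))))))
        - 1 / (2 * (ν + r)) * ∑ n, w n ^ 2 * ((x n - μ) ⬝ᵥ (Ψ⁻¹ *ᵥ (H *ᵥ (Ψ⁻¹ *ᵥ (x n - μ))))) ^ 2 := by
    rw [Finset.mul_sum, Finset.mul_sum, ← Finset.sum_sub_distrib]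
    exact Finset.sum_congr rfl fun n _ => hterm n
  linear_combination -hsL
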